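/- Let (W,S) be a Coxeter group with Coxeter matrix (m_{s,s'}). Let s, t ∈ S be distinct with m_{s,t} < ∞, let u, v be distinct reflections of W with (u,v) conjugate (componentwise, by a single element of W) to a pair of distinct elements of S with finite Coxeter matrix entry, and let q ∈ W. Assume u ∈ q D_{s,t} q⁻¹ and v ∈ q D_{s,t} q⁻¹, where D_{s,t} is the subgroup generated by s and t. Then the order of uv equals m_{s,t}. -/

import Mathlib

noncomputable section
open Real List

namespace CoxAux

variable {B : Type*}

/-- Cosine matrix entries of the standard bilinear form. -/
def kk (M : CoxeterMatrix B) (b c : B) : ℝ :=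
  if M b c = 0 then -1 else -Real.cos (Real.pi / (M b c : ℝ))

lemma kk_diag (M : CoxeterMatrix B) (b : B) : kk M b b = 1 := by
  simp [kk, M.diagonal b, Real.cos_pi]

lemma kk_symm (M : CoxeterMatrix B) (b c : B) : kk M b c = kk M c b := by
  simp [kk, M.symmetric b c]

/-- The linear functional `v ↦ 2⟨v, α_b⟩`. -/
def form (M : CoxeterMatrix B) (b : B) : (B →₀ ℝ) →ₗ[ℝ] ℝ :=
  Finsupp.linearCombination ℝ (fun c => kk M c b)

lemma form_single (M : CoxeterMatrix B) (b c : B) :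
    form M b (Finsupp.single c 1) = kk M c b := by
  simp [form]

/-- The reflection `σ_b` in the standard geometric representation. -/
def sigma (M : CoxeterMatrix B) (b : B) : Module.End ℝ (B →₀ ℝ) :=
  LinearMap.id - LinearMap.smulRight ((2:ℝ) • form M b) (Finsupp.single b 1)

lemma sigma_apply (M : CoxeterMatrix B) (b : B) (v : B →₀ ℝ) :
    sigma M b v = v - (2 * form M b v) • Finsupp.single b 1 := by
  simp [sigma, smul_smul]

lemma sigma_fix (M : CoxeterMatrix B) (b : B) (v : B →₀ ℝ) (h : form M b v = 0) :
    sigma M b v = v := by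
  simp [sigma_apply, h]

lemma sigma_sq (M : CoxeterMatrix B) (b : B) : sigma M b * sigma M b = 1 := by
  apply LinearMap.ext
  intro v
  have h1 : form M b (Finsupp.single b 1) = 1 := by rw [form_single, kk_diag]
  simp only [Module.End.mul_apply, sigma_apply, map_sub, map_smul, h1, Module.End.one_apply]
  module

end CoxAux

namespace CoxAux

variable {B : Type*}

/-- Normalized sine sequence. -/
def uu (θ : ℝ) (n : ℤ) : ℝ := Real.sin (n * θ) / Real.sin θ

lemma uu_zero (θ : ℝ) : uu θ 0 = 0 := by simp [uu]
lemma uu_one (θ : ℝ) (hs : Real.sin θ ≠ 0) : uu θ 1 = 1 := by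
  simp [uu, hs]
lemma uu_neg_one (θ : ℝ) (hs : Real.sin θ ≠ 0) : uu θ (-1) = -1 := by
  simp [uu]; field_simp

lemma uu_rec (θ : ℝ) (n : ℤ) : uu θ (n + 2) = 2 * Real.cos θ * uu θ (n + 1) - uu θ n := by
  unfold uu
  have h1 : ((n + 2 : ℤ) : ℝ) * θ = ((n + 1 : ℤ) : ℝ) * θ + θ := by push_cast; ring
  have h2 : ((n : ℤ) : ℝ) * θ = ((n + 1 : ℤ) : ℝ) * θ - θ := by push_cast; ring
  rw [h1, h2, Real.sin_add, Real.sin_sub]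
  ring

section Pair

variable (M : CoxeterMatrix B) (b c : B)

local notation "αb" => (Finsupp.single b 1 : B →₀ ℝ)
local notation "αc" => (Finsupp.single c 1 : B →₀ ℝ)
local notation "θ" => Real.pi / (M b c : ℝ)

lemma kk_off (hm : M b c ≠ 0) : kk M b c = -Real.cos θ := if_neg hm

lemma form_plane_b (hm : M b c ≠ 0) (x y : ℝ) :
    form M b (x • αb + y • αc) = x - Real.cos θ * y := by
  rw [map_add, map_smul, map_smul, form_single, form_single, kk_diag, kk_symm, kk_off M b c hm]
  simp; ring

lemma form_plane_c (hm : M b c ≠ 0) (x y : ℝ) :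
    form M c (x • αb + y • αc) = -(Real.cos θ) * x + y := by
  rw [map_add, map_smul, map_smul, form_single, form_single, kk_diag, kk_off M b c hm]
  simp; ring

lemma sigma_plane_b (hm : M b c ≠ 0) (x y : ℝ) :
    sigma M b (x • αb + y • αc) = (-x + 2 * Real.cos θ * y) • αb + y • αc := by
  rw [sigma_apply, form_plane_b M b c hm]
  module

lemma sigma_plane_c (hm : M b c ≠ 0) (x y : ℝ) :
    sigma M c (x • αb + y • αc) = x • αb + (2 * Real.cos θ * x - y) • αc := by
  rw [sigma_apply, form_plane_c M b c hm]
  module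

lemma pow_plane (hm : M b c ≠ 0) (hs : Real.sin θ ≠ 0) (k : ℕ) (x y : ℝ) :
    ((sigma M b * sigma M c) ^ k) (x • αb + y • αc) =
      (uu θ (2 * k + 1) * x - uu θ (2 * k) * y) • αb +
      (uu θ (2 * k) * x - uu θ (2 * k - 1) * y) • αc := by
  induction k with
  | zero =>
    simp only [pow_zero, Module.End.one_apply, Nat.cast_zero, mul_zero, zero_add, zero_sub]
    rw [uu_one _ hs, uu_zero, uu_neg_one _ hs]
    module
  | succ k ih =>
    rw [pow_succ', Module.End.mul_apply, ih, Module.End.mul_apply,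
      sigma_plane_c M b c hm, sigma_plane_b M b c hm]
    have r1 : uu θ (2 * k + 1) = 2 * Real.cos θ * uu θ (2 * k) - uu θ (2 * k - 1) := by
      have := uu_rec θ (2 * k - 1)
      rw [show (2 * (k:ℤ) - 1 + 2) = 2 * k + 1 by ring, show (2 * (k:ℤ) - 1 + 1) = 2 * k by ring]
        at this
      exact this
    have r2 : uu θ (2 * k + 2) = 2 * Real.cos θ * uu θ (2 * k + 1) - uu θ (2 * k) := by
      have := uu_rec θ (2 * k)
      rw [show (2 * (k:ℤ) + 1) = 2 * k + 1 by ring] at this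
      exact this
    have r3 : uu θ (2 * k + 3) = 2 * Real.cos θ * uu θ (2 * k + 2) - uu θ (2 * k + 1) := by
      have := uu_rec θ (2 * k + 1)
      rw [show (2 * (k:ℤ) + 1 + 2) = 2 * k + 3 by ring,
        show (2 * (k:ℤ) + 1 + 1) = 2 * k + 2 by ring] at this
      exact this
    have e1 : uu θ (2 * ((k:ℤ) + 1) + 1) * x - uu θ (2 * ((k:ℤ) + 1)) * y
        = -(uu θ (2 * k + 1) * x - uu θ (2 * k) * y)
          + 2 * Real.cos θ * (2 * Real.cos θ * (uu θ (2 * k + 1) * x - uu θ (2 * k) * y)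
            - (uu θ (2 * k) * x - uu θ (2 * k - 1) * y)) := by
      rw [show (2 * ((k:ℤ) + 1) + 1) = 2 * k + 3 by ring,
        show (2 * ((k:ℤ) + 1)) = 2 * k + 2 by ring]
      rw [r3, r2, r1]; ring
    have e2 : uu θ (2 * ((k:ℤ) + 1)) * x - uu θ (2 * ((k:ℤ) + 1) - 1) * y
        = 2 * Real.cos θ * (uu θ (2 * k + 1) * x - uu θ (2 * k) * y)
          - (uu θ (2 * k) * x - uu θ (2 * k - 1) * y) := by
      rw [show (2 * ((k:ℤ) + 1) - 1) = 2 * k + 1 by ring,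
        show (2 * ((k:ℤ) + 1)) = 2 * k + 2 by ring]
      rw [r2, r1]; ring
    push_cast
    rw [e1, e2]

lemma pow_perp (k : ℕ) (v : B →₀ ℝ) (h1 : form M b v = 0) (h2 : form M c v = 0) :
    ((sigma M b * sigma M c) ^ k) v = v := by
  induction k with
  | zero => simp
  | succ k ih =>
    rw [pow_succ', Module.End.mul_apply, ih, Module.End.mul_apply, sigma_fix M c v h2,
      sigma_fix M b v h1]

end Pair

end CoxAux

namespace CoxAux

variable {B : Type*}

section Rel

variable (M : CoxeterMatrix B) (b c : B)

local notation "αb" => (Finsupp.single b 1 : B →₀ ℝ)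
local notation "αc" => (Finsupp.single c 1 : B →₀ ℝ)
local notation "θ" => Real.pi / (M b c : ℝ)

lemma two_le_m (hbc : b ≠ c) (hm : M b c ≠ 0) : 2 ≤ M b c := by
  have := M.off_diagonal b c hbc
  omega

lemma theta_pos (hm : M b c ≠ 0) : 0 < θ := by
  apply div_pos Real.pi_pos
  exact_mod_cast Nat.pos_of_ne_zero hm

lemma theta_lt_pi (hbc : b ≠ c) (hm : M b c ≠ 0) : θ < Real.pi := by
  have h2 : (2 : ℝ) ≤ (M b c : ℝ) := by exact_mod_cast two_le_m M b c hbc hm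
  have : θ ≤ Real.pi / 2 := by
    apply div_le_div_of_nonneg_left Real.pi_pos.le (by norm_num) h2
  linarith [Real.pi_pos]

lemma sin_theta_pos (hbc : b ≠ c) (hm : M b c ≠ 0) : 0 < Real.sin θ :=
  Real.sin_pos_of_pos_of_lt_pi (theta_pos M b c hm) (theta_lt_pi M b c hbc hm)

lemma uu_high (hbc : b ≠ c) (hm : M b c ≠ 0) :
    uu θ (2 * (M b c : ℤ)) = 0 ∧ uu θ (2 * (M b c : ℤ) + 1) = 1 ∧
      uu θ (2 * (M b c : ℤ) - 1) = -1 := by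
  have hmR : ((M b c : ℝ)) ≠ 0 := by exact_mod_cast hm
  have hs := (sin_theta_pos M b c hbc hm).ne'
  have h2m : ((2 * (M b c : ℤ) : ℤ) : ℝ) * θ = 2 * Real.pi := by
    push_cast
    field_simp
  refine ⟨?_, ?_, ?_⟩
  · unfold uu
    rw [h2m, Real.sin_two_pi, zero_div]
  · unfold uu
    rw [show ((2 * (M b c : ℤ) + 1 : ℤ) : ℝ) * θ = ((2 * (M b c : ℤ) : ℤ) : ℝ) * θ + θ by
      push_cast; ring, h2m, add_comm, Real.sin_add_two_pi]
    field_simp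
  · unfold uu
    rw [show ((2 * (M b c : ℤ) - 1 : ℤ) : ℝ) * θ = ((2 * (M b c : ℤ) : ℤ) : ℝ) * θ - θ by
      push_cast; ring, h2m, Real.sin_two_pi_sub]
    field_simp

lemma sigma_braid (hbc : b ≠ c) (hm : M b c ≠ 0) :
    (sigma M b * sigma M c) ^ (M b c) = 1 := by
  obtain ⟨h0, h1, hneg⟩ := uu_high M b c hbc hm
  have hs := (sin_theta_pos M b c hbc hm).ne'
  have hcos2 : (1 : ℝ) - Real.cos θ ^ 2 ≠ 0 := by
    have := Real.sin_sq_add_cos_sq θ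
    have : (1 : ℝ) - Real.cos θ ^ 2 = Real.sin θ ^ 2 := by linarith
    rw [this]
    exact pow_ne_zero 2 hs
  apply LinearMap.ext
  intro v
  set t := Real.cos θ with hT
  set c1 := form M b v with hc1
  set c2 := form M c v with hc2
  set x := (c1 + t * c2) / (1 - t ^ 2) with hx
  set y := (c2 + t * c1) / (1 - t ^ 2) with hy
  have hv : v = (x • αb + y • αc) + (v - (x • αb + y • αc)) := by abel
  have hfb : form M b (v - (x • αb + y • αc)) = 0 := by
    rw [map_sub, form_plane_b M b c hm, ← hc1, hx, hy]
    field_simp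
    ring
  have hfc : form M c (v - (x • αb + y • αc)) = 0 := by
    rw [map_sub, form_plane_c M b c hm, ← hc2, hx, hy]
    field_simp
    ring
  rw [Module.End.one_apply]
  nth_rw 1 [hv]
  rw [map_add, pow_plane M b c hm hs, pow_perp M b c, h0, h1, hneg]
  · module
  · exact hfb
  · exact hfc

lemma sigma_liftable : M.IsLiftable (sigma M) := by
  intro b c
  rcases eq_or_ne b c with rfl | hbc
  · rw [M.diagonal, pow_one, sigma_sq]
  rcases eq_or_ne (M b c) 0 with h0 | h0
  · rw [h0, pow_zero]
  · exact sigma_braid M b c hbc h0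

end Rel

end CoxAux

namespace CoxeterSystem

open CoxAux

variable {B W : Type*} [Group W] {M : CoxeterMatrix B} (cs : CoxeterSystem M W)

/-- The exact order of a product of two distinct simple reflections. -/
theorem orderOf_simple_mul_simple (b c : B) (hbc : b ≠ c) (hm : M b c ≠ 0) :
    orderOf (cs.simple b * cs.simple c) = M b c := by
  have hdvd : orderOf (cs.simple b * cs.simple c) ∣ M b c :=
    orderOf_dvd_of_pow_eq_one (cs.simple_mul_simple_pow b c)
  set n := orderOf (cs.simple b * cs.simple c) with hn
  have hn0 : n ≠ 0 := by
    intro h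
    rw [h] at hdvd
    exact hm (Nat.eq_zero_of_zero_dvd hdvd)
  -- push through the geometric representation
  have hpow : (cs.simple b * cs.simple c) ^ n = 1 := pow_orderOf_eq_one _
  have hρ := congrArg (cs.lift ⟨sigma M, sigma_liftable M⟩) hpow
  rw [map_pow, map_mul, map_one, cs.lift_apply_simple, cs.lift_apply_simple] at hρ
  have happ := congrArg (fun f : Module.End ℝ (B →₀ ℝ) =>
      f ((1:ℝ) • Finsupp.single b 1 + (0:ℝ) • Finsupp.single c 1)) hρ
  beta_reduce at happ
  have hs := (sin_theta_pos M b c hbc hm).ne'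
  rw [pow_plane M b c hm hs, Module.End.one_apply] at happ
  -- compare coefficients at `b` and `c`
  set θv := Real.pi / (M b c : ℝ) with hθ
  have sbb : (Finsupp.single b (1:ℝ)) b = 1 := Finsupp.single_eq_same
  have sbc : (Finsupp.single b (1:ℝ)) c = 0 := Finsupp.single_eq_of_ne (Ne.symm hbc)
  have scb : (Finsupp.single c (1:ℝ)) b = 0 := Finsupp.single_eq_of_ne hbc
  have scc : (Finsupp.single c (1:ℝ)) c = 1 := Finsupp.single_eq_same
  have hc := congrArg (fun f : B →₀ ℝ => f c) happ
  have hb := congrArg (fun f : B →₀ ℝ => f b) happ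
  simp only [Finsupp.add_apply, Finsupp.smul_apply, smul_eq_mul, sbb, sbc, scb, scc] at hc hb
  have huc : uu θv (2 * (n:ℤ)) = 0 := by linear_combination hc
  have hub : uu θv (2 * (n:ℤ) + 1) = 1 := by linear_combination hb
  have hmR : ((M b c : ℝ)) ≠ 0 := by exact_mod_cast hm
  have hsin0 : Real.sin (((2 * (n:ℤ) : ℤ) : ℝ) * θv) = 0 := by
    unfold uu at huc
    exact (div_eq_zero_iff.mp huc).resolve_right hs
  obtain ⟨z, hz⟩ := Real.sin_eq_zero_iff.mp hsin0
  -- z * π = 2n * (π / m),  so  z * m = 2 * n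
  have hπ : Real.pi ≠ 0 := Real.pi_ne_zero
  have hzpm : (z : ℝ) * Real.pi * (M b c : ℝ) = 2 * (n : ℝ) * Real.pi := by
    rw [hz, hθ]
    push_cast
    field_simp
  have hzm : (z : ℝ) * (M b c : ℝ) = 2 * (n : ℝ) :=
    mul_right_cancel₀ hπ (by linear_combination hzpm)
  have hzmZ : z * (M b c : ℤ) = 2 * (n : ℤ) := by exact_mod_cast hzm
  rcases Int.even_or_odd z with ⟨w, hw⟩ | ⟨w, hw⟩
  · -- z = w + w : then n = w * m and we conclude
    have h2 : 2 * (w * (M b c : ℤ)) = 2 * (n : ℤ) := by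
      rw [hw] at hzmZ
      linear_combination hzmZ
    have hwm : w * (M b c : ℤ) = (n : ℤ) := by omega
    have hdvd2 : ((M b c : ℕ) : ℤ) ∣ ((n : ℕ) : ℤ) := ⟨w, by linear_combination - hwm⟩
    exact Nat.dvd_antisymm hdvd (Int.natCast_dvd_natCast.mp hdvd2)
  · -- z = 2w+1 : contradiction with hub
    exfalso
    have harg : ((2 * (n:ℤ) + 1 : ℤ) : ℝ) * θv = (θv + Real.pi) + (w : ℝ) * (2 * Real.pi) := by
      have h2n : ((2 * (n:ℤ) : ℤ) : ℝ) * θv = (z : ℝ) * Real.pi := hz.symm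
      push_cast
      push_cast at h2n
      rw [hw] at h2n
      push_cast at h2n
      nlinarith [h2n]
    have : Real.sin (((2 * (n:ℤ) + 1 : ℤ) : ℝ) * θv) = -Real.sin θv := by
      rw [harg, show (w:ℝ) * (2 * Real.pi) = ((w:ℤ):ℝ) * (2*Real.pi) by push_cast; ring,
        Real.sin_add_int_mul_two_pi, Real.sin_add_pi]
    unfold uu at hub
    rw [this, neg_div, div_self hs] at hub
    norm_num at hub

end CoxeterSystem

namespace CoxeterSystem

open List

attribute [local instance] Classical.propDecidable

variable {B W : Type*} [Group W] {M : CoxeterMatrix B} (cs : CoxeterSystem M W)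

local prefix:100 "ss" => cs.simple
local prefix:100 "π" => cs.wordProd

private lemma conj_eq_iff' (g w x : W) : g * w * g⁻¹ = x ↔ w = g⁻¹ * x * g := by
  constructor <;> rintro rfl <;> group

private lemma shuttle (a b : W) (n : ℕ) : a * (b * a) ^ n = (a * b) ^ n * a := by
  induction n with
  | zero => simp
  | succ k ih =>
    rw [pow_succ, ← mul_assoc, ih, pow_succ]
    simp [mul_assoc]

/-- The underlying function of the sign-flipping permutation. -/
noncomputable def sgnFun (i : B) : W × ℤˣ → W × ℤˣ :=
  fun p => (ss i * p.1 * ss i, if p.1 = ss i then -p.2 else p.2)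

lemma sgnFun_cond (i : B) (w : W) : (ss i * w * ss i = ss i) ↔ (w = ss i) := by
  constructor
  · intro h
    have := congrArg (fun z => ss i * z * ss i) h
    simpa [mul_assoc] using this
  · rintro rfl
    simp

lemma sgnFun_invol (i : B) : Function.Involutive (cs.sgnFun i) := by
  rintro ⟨w, ε⟩
  unfold sgnFun
  simp only
  rw [Prod.mk.injEq]
  refine ⟨by simp [mul_assoc], ?_⟩
  rw [if_congr (cs.sgnFun_cond i w) rfl rfl]
  split_ifs with h
  · simp
  · rfl

/-- The sign-flipping permutation attached to a simple reflection. -/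
noncomputable def sgnPerm (i : B) : Equiv.Perm (W × ℤˣ) :=
  Function.Involutive.toPerm (cs.sgnFun i) (cs.sgnFun_invol i)

lemma sgnPerm_apply (i : B) (p : W × ℤˣ) :
    cs.sgnPerm i p = (ss i * p.1 * ss i, if p.1 = ss i then -p.2 else p.2) := rfl

private lemma flip_eq (c : Prop) [Decidable c] (x : ℤˣ) :
    (if c then -x else x) = (if c then -1 else 1) * x := by
  split_ifs <;> simp

lemma sgnPerm_pow_apply (i j : B) (n : ℕ) (w : W) (ε : ℤˣ) :
    ((cs.sgnPerm i * cs.sgnPerm j) ^ n) (w, ε) =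
      ((ss i * ss j) ^ n * w * ((ss i * ss j) ^ n)⁻¹,
        (∏ l ∈ Finset.range (2 * n),
          (if w = (ss j * ss i) ^ l * ss j then (-1 : ℤˣ) else 1)) * ε) := by
  induction n with
  | zero => simp
  | succ n ih =>
    rw [pow_succ', Equiv.Perm.mul_apply, ih, Equiv.Perm.mul_apply]
    have hinv : ((ss i * ss j) ^ n)⁻¹ = (ss j * ss i) ^ n := by
      rw [← inv_pow, mul_inv_rev, cs.inv_simple, cs.inv_simple]
    have hA : ((ss j * ss i) ^ n * ss j) * (ss i * ss j) ^ n
        = (ss j * ss i) ^ (2 * n) * ss j := by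
      rw [mul_assoc, shuttle, ← mul_assoc, ← pow_add, ← two_mul]
    have hc1 : ((ss i * ss j) ^ n * w * ((ss i * ss j) ^ n)⁻¹ = ss j)
        ↔ (w = (ss j * ss i) ^ (2 * n) * ss j) := by
      rw [conj_eq_iff', hinv, hA]
    have hshape : ss j * ((ss i * ss j) ^ n * w * ((ss i * ss j) ^ n)⁻¹) * ss j
        = (ss j * (ss i * ss j) ^ n) * w * (ss j * (ss i * ss j) ^ n)⁻¹ := by
      rw [mul_inv_rev, cs.inv_simple]
      simp [mul_assoc]
    have hB : (ss j * (ss i * ss j) ^ n)⁻¹ * ss i * (ss j * (ss i * ss j) ^ n)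
        = (ss j * ss i) ^ (2 * n + 1) * ss j := by
      rw [mul_inv_rev, cs.inv_simple, hinv, shuttle,
        show 2 * n + 1 = n + 1 + n by omega, pow_add, pow_succ]
      simp [mul_assoc]
    have hc2 : (ss j * ((ss i * ss j) ^ n * w * ((ss i * ss j) ^ n)⁻¹) * ss j = ss i)
        ↔ (w = (ss j * ss i) ^ (2 * n + 1) * ss j) := by
      rw [hshape, conj_eq_iff', hB]
    rw [sgnPerm_apply, sgnPerm_apply]
    simp only
    rw [Prod.mk.injEq]
    constructor
    · -- first components
      rw [pow_succ']
      rw [mul_inv_rev (ss i * ss j) ((ss i * ss j) ^ n)]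
      rw [mul_inv_rev (ss i) (ss j), cs.inv_simple, cs.inv_simple]
      simp [mul_assoc]
    · -- signs
      rw [if_congr hc1 rfl rfl, if_congr hc2 rfl rfl,
        show 2 * (n + 1) = (2 * n) + 1 + 1 by omega, Finset.prod_range_succ,
        Finset.prod_range_succ]
      split_ifs <;> simp [mul_comm, mul_left_comm, mul_assoc]

lemma sgnPerm_liftable : M.IsLiftable (fun i => cs.sgnPerm i) := by
  intro i j
  rcases eq_or_ne i j with rfl | hij
  · rw [M.diagonal, pow_one]
    apply Equiv.ext
    intro p
    rw [Equiv.Perm.mul_apply, Equiv.Perm.one_apply]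
    exact cs.sgnFun_invol i p
  rcases eq_or_ne (M i j) 0 with h0 | h0
  · rw [h0, pow_zero]
  · apply Equiv.ext
    rintro ⟨w, ε⟩
    rw [sgnPerm_pow_apply]
    have h1 : (ss i * ss j) ^ M i j = 1 := cs.simple_mul_simple_pow i j
    have h2 : (ss j * ss i) ^ M i j = 1 := cs.simple_mul_simple_pow' i j
    rw [h1]
    simp only [one_mul, inv_one, mul_one, Equiv.Perm.one_apply]
    have hper : ∀ l : ℕ, (ss j * ss i) ^ (M i j + l) = (ss j * ss i) ^ l := by
      intro l
      rw [pow_add, h2, one_mul]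
    have hprod : (∏ l ∈ Finset.range (2 * M i j),
        (if w = (ss j * ss i) ^ l * ss j then (-1 : ℤˣ) else 1)) = 1 := by
      rw [two_mul, Finset.prod_range_add]
      have heq : ∀ x ∈ Finset.range (M i j),
          (if w = (ss j * ss i) ^ (M i j + x) * ss j then (-1 : ℤˣ) else 1)
          = (if w = (ss j * ss i) ^ x * ss j then (-1 : ℤˣ) else 1) := by
        intro x _
        rw [hper x]
      rw [Finset.prod_congr rfl heq]
      exact Int.units_mul_self _
    rw [hprod, one_mul]

/-- The sign representation homomorphism. -/
noncomputable def sgnRep : W →* Equiv.Perm (W × ℤˣ) :=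
  cs.lift ⟨fun i => cs.sgnPerm i, cs.sgnPerm_liftable⟩

lemma sgnRep_simple (i : B) : cs.sgnRep (ss i) = cs.sgnPerm i :=
  cs.lift_apply_simple cs.sgnPerm_liftable i

lemma sgnRep_wordProd (ω : List B) (t : W) (ε : ℤˣ) :
    cs.sgnRep (π ω) (t, ε) =
      (π ω * t * (π ω)⁻¹,
        ((cs.rightInvSeq ω).map (fun r => if t = r then (-1 : ℤˣ) else 1)).prod * ε) := by
  induction ω with
  | nil => simp [rightInvSeq]
  | cons i ω ih =>
    rw [cs.wordProd_cons, map_mul, Equiv.Perm.mul_apply, ih, cs.sgnRep_simple, sgnPerm_apply]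
    simp only
    rw [Prod.mk.injEq]
    have hc : (π ω * t * (π ω)⁻¹ = ss i) ↔ (t = (π ω)⁻¹ * ss i * π ω) := by
      rw [conj_eq_iff']
    constructor
    · rw [mul_inv_rev (ss i) (π ω), cs.inv_simple]
      simp [mul_assoc]
    · rw [flip_eq, if_congr hc rfl rfl]
      show _ = ((((π ω)⁻¹ * ss i * π ω) :: cs.rightInvSeq ω).map
        (fun r => if t = r then (-1 : ℤˣ) else 1)).prod * ε
      rw [List.map_cons, List.prod_cons, ← mul_assoc]

end CoxeterSystem

namespace CoxeterSystem

open List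

attribute [local instance] Classical.propDecidable

variable {B W : Type*} [Group W] {M : CoxeterMatrix B} (cs : CoxeterSystem M W)

local prefix:100 "ss" => cs.simple
local prefix:100 "π" => cs.wordProd
local prefix:100 "ℓ" => cs.length

/-- The sign of `t` relative to a word depends only on the product of the word. -/
lemma sgn_eq_sgn_of_wordProd_eq (ω ω' : List B) (h : π ω = π ω') (t : W) :
    ((cs.rightInvSeq ω).map (fun r => if t = r then (-1 : ℤˣ) else 1)).prod
      = ((cs.rightInvSeq ω').map (fun r => if t = r then (-1 : ℤˣ) else 1)).prod := by
  have h1 := cs.sgnRep_wordProd ω t 1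
  have h2 := cs.sgnRep_wordProd ω' t 1
  rw [h] at h1
  rw [h1] at h2
  have := congrArg Prod.snd h2
  simpa using this

lemma mem_rightInvSeq_of_isRightDescent (ω : List B) (hred : cs.IsReduced ω) (i : B)
    (hdesc : cs.IsRightDescent (π ω) i) : ss i ∈ cs.rightInvSeq ω := by
  obtain ⟨ω', hlen', hprod'⟩ := cs.exists_reduced_word (π ω * ss i)
  have hred' : cs.IsReduced ω' := by
    exact hlen'
  have hconcat : π (ω'.concat i) = π ω := by
    rw [cs.wordProd_concat, ← hprod', cs.simple_mul_simple_cancel_right]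
  -- the sign of `s i` in `ω'.concat i` is `-1`
  have hnotmem : ss i ∉ cs.rightInvSeq ω' := by
    intro hmem
    have hinv := cs.isRightInversion_of_mem_rightInvSeq hred' hmem
    have : ℓ (π ω' * ss i) < ℓ (π ω') := hinv.2
    rw [← hprod', cs.simple_mul_simple_cancel_right] at this
    exact Nat.lt_irrefl _ (this.trans hdesc)
  have hsgn' : ((cs.rightInvSeq (ω'.concat i)).map
      (fun r => if ss i = r then (-1 : ℤˣ) else 1)).prod = -1 := by
    rw [cs.rightInvSeq_concat]
    rw [List.concat_eq_append, List.map_append, List.prod_append]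
    have hone : ((List.map (⇑(MulAut.conj (ss i))) (cs.rightInvSeq ω')).map
        (fun r => if ss i = r then (-1 : ℤˣ) else 1)).prod = 1 := by
      apply List.prod_eq_one
      intro x hx
      rw [List.mem_map] at hx
      obtain ⟨r', hr', hfx⟩ := hx
      rw [List.mem_map] at hr'
      obtain ⟨r, hr, hfr⟩ := hr'
      have hne : ss i ≠ r' := by
        intro heq
        apply hnotmem
        rw [← hfr, MulAut.conj_apply, cs.inv_simple] at heq
        have : r = ss i := (cs.sgnFun_cond i r).mp heq.symm
        rw [this] at hr
        exact hr
      rw [← hfx, if_neg hne]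
    rw [hone, one_mul]
    simp
  have hsgn := cs.sgn_eq_sgn_of_wordProd_eq ω (ω'.concat i) hconcat.symm (ss i)
  rw [hsgn'] at hsgn
  -- hence `s i` appears in `ris ω`
  by_contra hno
  have : ((cs.rightInvSeq ω).map (fun r => if ss i = r then (-1 : ℤˣ) else 1)).prod = 1 := by
    apply List.prod_eq_one
    intro x hx
    rw [List.mem_map] at hx
    obtain ⟨r, hr, hfr⟩ := hx
    have : ss i ≠ r := fun heq => hno (heq ▸ hr)
    rw [← hfr, if_neg this]
  rw [this] at hsgn
  exact absurd hsgn (by decide)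

/-- Right exchange property. -/
lemma exchange_right (ω : List B) (hred : cs.IsReduced ω) (i : B)
    (hdesc : cs.IsRightDescent (π ω) i) :
    ∃ l, l < ω.length ∧ π ω * ss i = π (ω.eraseIdx l) := by
  have hmem := cs.mem_rightInvSeq_of_isRightDescent ω hred i hdesc
  obtain ⟨l, hl, hget⟩ := List.getElem_of_mem hmem
  rw [cs.length_rightInvSeq] at hl
  refine ⟨l, hl, ?_⟩
  have hgetD : (cs.rightInvSeq ω).getD l 1 = ss i := by
    rw [List.getD_eq_getElem _ _ (by rw [cs.length_rightInvSeq]; exact hl)]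
    exact hget
  rw [← hgetD]
  exact cs.wordProd_mul_getD_rightInvSeq ω l

/-- Left exchange property. -/
lemma exchange_left (ω : List B) (hred : cs.IsReduced ω) (i : B)
    (hdesc : cs.IsLeftDescent (π ω) i) :
    ∃ l, l < ω.length ∧ ss i * π ω = π (ω.eraseIdx l) := by
  have hredr : cs.IsReduced ω.reverse := (cs.isReduced_reverse_iff ω).mpr hred
  have hdescr : cs.IsRightDescent (π ω.reverse) i := by
    rw [IsRightDescent, cs.wordProd_reverse]
    have h1 : ℓ ((π ω)⁻¹ * ss i) = ℓ (ss i * π ω) := by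
      rw [← cs.length_inv, mul_inv_rev, inv_inv, cs.inv_simple]
    rw [h1, cs.length_inv]
    exact hdesc
  have hmem := cs.mem_rightInvSeq_of_isRightDescent ω.reverse hredr i hdescr
  rw [cs.rightInvSeq_reverse, List.mem_reverse] at hmem
  obtain ⟨l, hl, hget⟩ := List.getElem_of_mem hmem
  rw [cs.length_leftInvSeq] at hl
  refine ⟨l, hl, ?_⟩
  have hgetD : (cs.leftInvSeq ω).getD l 1 = ss i := by
    rw [List.getD_eq_getElem _ _ (by rw [cs.length_leftInvSeq]; exact hl)]
    exact hget
  rw [← hgetD]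
  exact cs.getD_leftInvSeq_mul_wordProd ω l

end CoxeterSystem

namespace CoxeterSystem

open List

attribute [local instance] Classical.propDecidable

variable {B W : Type*} [Group W] {M : CoxeterMatrix B} (cs : CoxeterSystem M W)

local prefix:100 "ss" => cs.simple
local prefix:100 "π" => cs.wordProd
local prefix:100 "ℓ" => cs.length

private lemma del_aux : ∀ n (ω : List B), ω.length ≤ n →
    ∃ ω', cs.IsReduced ω' ∧ π ω' = π ω ∧ ∀ x ∈ ω', x ∈ ω := by
  intro n
  induction n with
  | zero =>
    intro ω hlen
    rw [Nat.le_zero, List.length_eq_zero_iff] at hlen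
    subst hlen
    exact ⟨[], by simp [IsReduced], rfl, by simp⟩
  | succ n ih =>
    intro ω hlen
    by_cases hred : cs.IsReduced ω
    · exact ⟨ω, hred, rfl, fun x hx => hx⟩
    · have hlen0 : 0 < ω.length := by
        rcases Nat.eq_zero_or_pos ω.length with h0 | h0
        · exfalso
          rw [List.length_eq_zero_iff] at h0
          subst h0
          exact hred (by simp [IsReduced])
        · exact h0
      have hex : ∃ k, ¬ cs.IsReduced (ω.take (k+1)) := by
        refine ⟨ω.length - 1, ?_⟩
        rw [show ω.length - 1 + 1 = ω.length by omega, List.take_length]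
        exact hred
      set k := Nat.find hex with hk
      have hkspec : ¬ cs.IsReduced (ω.take (k+1)) := Nat.find_spec hex
      have hkmin : ∀ m, m < k → cs.IsReduced (ω.take (m+1)) :=
        fun m hm => not_not.mp (Nat.find_min hex hm)
      have hkle : k ≤ ω.length - 1 := Nat.find_min' hex (by
        rw [show ω.length - 1 + 1 = ω.length by omega, List.take_length]
        exact hred)
      have hklt : k < ω.length := by omega
      have hkred : cs.IsReduced (ω.take k) := by
        rcases Nat.eq_zero_or_pos k with h0 | h0
        · rw [h0]
          simp [IsReduced]
        · have := hkmin (k-1) (by omega)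
          rwa [show k - 1 + 1 = k by omega] at this
      set i := ω[k] with hi
      have htake : ω.take (k+1) = ω.take k ++ [i] := (List.take_concat_get' ω k hklt).symm
      have hπtake : π (ω.take (k+1)) = π (ω.take k) * ss i := by
        rw [htake, cs.wordProd_append, cs.wordProd_singleton]
      have hlentake : (ω.take k).length = k := by
        rw [List.length_take]
        omega
      have hℓtake : ℓ (π (ω.take k)) = k := by
        have h2 := hkred
        rw [IsReduced] at h2
        rw [h2, hlentake]
      have hdesc : cs.IsRightDescent (π (ω.take k)) i := by
        rcases cs.length_mul_simple (π (ω.take k)) i with h | h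
        · exfalso
          apply hkspec
          rw [IsReduced, hπtake, h, hℓtake, List.length_take]
          omega
        · rw [IsRightDescent]
          omega
      obtain ⟨l, hl, hexch⟩ := cs.exchange_right (ω.take k) hkred i hdesc
      set Ω := (ω.take k).eraseIdx l ++ ω.drop (k+1) with hΩ
      have hπΩ : π Ω = π ω := by
        rw [hΩ, cs.wordProd_append, ← hexch]
        conv_rhs => rw [← List.take_append_drop (k+1) ω]
        rw [cs.wordProd_append, hπtake]
      have hlenΩ : Ω.length ≤ n := by
        rw [hΩ, List.length_append, List.length_eraseIdx]
        rw [if_pos hl, hlentake, List.length_drop]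
        omega
      obtain ⟨ω', hred', hprod', hmem'⟩ := ih Ω hlenΩ
      refine ⟨ω', hred', by rw [hprod', hπΩ], ?_⟩
      intro x hx
      have := hmem' x hx
      rw [hΩ, List.mem_append] at this
      rcases this with h | h
      · exact List.take_subset k ω (List.eraseIdx_subset h)
      · exact List.drop_subset _ ω h

/-- Every word has a reduced subword with the same product. -/
lemma exists_reduced_subword (ω : List B) :
    ∃ ω', cs.IsReduced ω' ∧ π ω' = π ω ∧ ∀ x ∈ ω', x ∈ ω :=
  cs.del_aux ω.length ω le_rfl

/-- Every element of the dihedral subgroup is a product of letters `i`, `j`. -/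
lemma word_of_mem_closure (i j : B) (w : W)
    (hw : w ∈ Subgroup.closure {ss i, ss j}) :
    ∃ ω, (∀ x ∈ ω, x = i ∨ x = j) ∧ w = π ω := by
  induction hw using Subgroup.closure_induction with
  | mem g hg =>
    rcases hg with hg | hg
    · exact ⟨[i], by simp, by rw [hg, cs.wordProd_singleton]⟩
    · exact ⟨[j], by simp, by rw [hg, cs.wordProd_singleton]⟩
  | one => exact ⟨[], by simp, by simp⟩
  | mul g h _ _ ihg ihh =>
    obtain ⟨ωg, hmg, hpg⟩ := ihg
    obtain ⟨ωh, hmh, hph⟩ := ihh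
    refine ⟨ωg ++ ωh, ?_, by rw [cs.wordProd_append, hpg, hph]⟩
    intro x hx
    rcases List.mem_append.mp hx with h | h
    · exact hmg x h
    · exact hmh x h
  | inv g _ ihg =>
    obtain ⟨ωg, hmg, hpg⟩ := ihg
    refine ⟨ωg.reverse, fun x hx => hmg x (List.mem_reverse.mp hx), ?_⟩
    rw [cs.wordProd_reverse, hpg]

/-- Every element of the dihedral subgroup has a reduced word in the letters `i`, `j`. -/
lemma reduced_word_of_mem_closure (i j : B) (w : W)
    (hw : w ∈ Subgroup.closure {ss i, ss j}) :
    ∃ ω, cs.IsReduced ω ∧ (∀ x ∈ ω, x = i ∨ x = j) ∧ w = π ω := by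
  obtain ⟨ω, hmem, hprod⟩ := cs.word_of_mem_closure i j w hw
  obtain ⟨ω', hred', hprod', hmem'⟩ := cs.exists_reduced_subword ω
  exact ⟨ω', hred', fun x hx => hmem x (hmem' x hx), by rw [hprod, hprod']⟩

lemma wordProd_mem_closure (i j : B) (ω : List B) (hmem : ∀ x ∈ ω, x = i ∨ x = j) :
    π ω ∈ Subgroup.closure {ss i, ss j} := by
  induction ω with
  | nil =>
    rw [cs.wordProd_nil]
    exact one_mem _
  | cons k ω ih =>
    rw [cs.wordProd_cons]
    apply mul_mem
    · rcases hmem k (by simp) with h | h <;> subst h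
      · exact Subgroup.subset_closure (by simp)
      · exact Subgroup.subset_closure (by simp)
    · exact ih (fun x hx => hmem x (by simp [hx]))

end CoxeterSystem

namespace CoxeterSystem

open List

attribute [local instance] Classical.propDecidable

variable {B W : Type*} [Group W] {M : CoxeterMatrix B} (cs : CoxeterSystem M W)

local prefix:100 "ss" => cs.simple
local prefix:100 "π" => cs.wordProd
local prefix:100 "ℓ" => cs.length

/-- Deodhar's lemma (left version): if `y` has minimal length in its coset `D y`, where `D` is
the dihedral subgroup generated by `s i` and `s j`, then lengths add. -/
lemma deodhar_left (i j : B) (y : W)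
    (hmin : ∀ d ∈ Subgroup.closure {ss i, ss j}, ℓ y ≤ ℓ (d * y))
    (a : W) (ha : a ∈ Subgroup.closure {ss i, ss j}) :
    ℓ (a * y) = ℓ a + ℓ y := by
  obtain ⟨κ, hredκ, hmemκ, haκ⟩ := cs.reduced_word_of_mem_closure i j a ha
  have hlenκ : ℓ (π κ) = κ.length := by
    rw [← haκ]
    rw [haκ]
    exact hredκ
  rw [haκ, hlenκ]
  clear haκ hlenκ ha a
  induction κ with
  | nil => simp
  | cons k κ ih =>
    have hredκ' : cs.IsReduced κ := by
      have := hredκ.drop 1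
      simpa using this
    have hmemκ' : ∀ x ∈ κ, x = i ∨ x = j := fun x hx => hmemκ x (by simp [hx])
    have ihy : ℓ (π κ * y) = κ.length + ℓ y := ih hredκ' hmemκ'
    obtain ⟨ωy, hlen_y, hy⟩ := cs.exists_reduced_word y
    have hredy : cs.IsReduced ωy := by
      exact hlen_y
    have hcat : cs.IsReduced (κ ++ ωy) := by
      rw [IsReduced, cs.wordProd_append, ← hy, ihy, List.length_append, hy]; exact congrArg _ hlen_y
    have hprodcat : π (κ ++ ωy) = π κ * y := by
      rw [cs.wordProd_append, ← hy]
    rw [cs.wordProd_cons, mul_assoc]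
    rcases cs.length_simple_mul (π κ * y) k with h | h
    · rw [h, ihy, List.length_cons]
      omega
    · exfalso
      have hdesc : cs.IsLeftDescent (π (κ ++ ωy)) k := by
        rw [IsLeftDescent, hprodcat]
        omega
      obtain ⟨l, hl, hex⟩ := cs.exchange_left (κ ++ ωy) hcat k hdesc
      rw [hprodcat] at hex
      by_cases hlκ : l < κ.length
      · rw [List.eraseIdx_append_of_lt_length hlκ ωy, cs.wordProd_append, ← hy] at hex
        have hcancel : ss k * π κ = π (κ.eraseIdx l) := by
          have hex' : (ss k * π κ) * y = π (κ.eraseIdx l) * y := by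
            rw [mul_assoc]
            exact hex
          exact mul_right_cancel hex'
        have h1 : ℓ (π (k :: κ)) ≤ (κ.eraseIdx l).length :=
          cs.wordProd_cons k κ ▸ hcancel ▸ cs.length_wordProd_le (κ.eraseIdx l)
        have h2 : ℓ (π (k :: κ)) = κ.length + 1 := by
          have := hredκ
          rw [IsReduced] at this
          rw [this, List.length_cons]
        rw [List.length_eraseIdx, if_pos hlκ] at h1
        omega
      · push_neg at hlκ
        set m := l - κ.length with hm
        have hmlt : m < ωy.length := by
          rw [List.length_append] at hl
          omega
        rw [List.eraseIdx_append_of_length_le hlκ ωy, cs.wordProd_append] at hex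
        set d := (π κ)⁻¹ * ss k * π κ with hd
        have hdmem : d ∈ Subgroup.closure {ss i, ss j} := by
          have hπκ : π κ ∈ Subgroup.closure {ss i, ss j} :=
            cs.wordProd_mem_closure i j κ hmemκ'
          have hssk : ss k ∈ Subgroup.closure {ss i, ss j} := by
            rcases hmemκ k (by simp) with h' | h' <;> subst h'
            · exact Subgroup.subset_closure (by simp)
            · exact Subgroup.subset_closure (by simp)
          exact mul_mem (mul_mem (inv_mem hπκ) hssk) hπκ
        have hdy : d * y = π (ωy.eraseIdx m) := by
          rw [hd]
          have : (π κ)⁻¹ * (ss k * (π κ * y)) = (π κ)⁻¹ * (π κ * π (ωy.eraseIdx m)) := by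
            rw [hex]
          rw [mul_assoc, mul_assoc]
          rw [this, ← mul_assoc, inv_mul_cancel, one_mul]
        have hup : ℓ (d * y) ≤ ωy.length - 1 := by
          rw [hdy]
          have := cs.length_wordProd_le (ωy.eraseIdx m)
          rw [List.length_eraseIdx, if_pos hmlt] at this
          exact this
        have hlow := hmin d hdmem
        have hℓy : ℓ y = ωy.length := by rw [hy]; exact hlen_y
        omega

end CoxeterSystem

private lemma orderOf_conj'' {W : Type*} [Group W] (g h : W) :
    orderOf (g * h * g⁻¹) = orderOf h := by
  have hsc : SemiconjBy g h (g * h * g⁻¹) := by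
    unfold SemiconjBy
    group
  exact (hsc.orderOf_eq g).symm

theorem order_eq_of_mem_conj_dihedral' {B W : Type*} [Group W] {M : CoxeterMatrix B}
    (cs : CoxeterSystem M W) (i j : B) (hij : i ≠ j) (hfin : M.M i j ≠ 0)
    (u v : W)
    (huv : ∃ (x : W) (i' j' : B), i' ≠ j' ∧ M.M i' j' ≠ 0 ∧
        u = x * cs.simple i' * x⁻¹ ∧ v = x * cs.simple j' * x⁻¹)
    (q : W)
    (hu : q⁻¹ * u * q ∈ Subgroup.closure {cs.simple i, cs.simple j})
    (hv : q⁻¹ * v * q ∈ Subgroup.closure {cs.simple i, cs.simple j}) :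
    orderOf (u * v) = M.M i j := by
  classical
  obtain ⟨x, i', j', hij', hfin', hu', hv'⟩ := huv
  have hu2 : q⁻¹ * u * q ∈ Subgroup.closure {cs.simple i, cs.simple j} := hu
  have hv2 : q⁻¹ * v * q ∈ Subgroup.closure {cs.simple i, cs.simple j} := hv
  set y₀ := q⁻¹ * x with hy₀
  have h1 : y₀ * cs.simple i' * y₀⁻¹ ∈ Subgroup.closure {cs.simple i, cs.simple j} := by
    have he : y₀ * cs.simple i' * y₀⁻¹ = q⁻¹ * u * q := by
      rw [hu', hy₀]
      group
    rw [he]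
    exact hu2
  have h2 : y₀ * cs.simple j' * y₀⁻¹ ∈ Subgroup.closure {cs.simple i, cs.simple j} := by
    have he : y₀ * cs.simple j' * y₀⁻¹ = q⁻¹ * v * q := by
      rw [hv', hy₀]
      group
    rw [he]
    exact hv2
  have hconj0 : ∀ g ∈ Subgroup.closure {cs.simple i', cs.simple j'},
      y₀ * g * y₀⁻¹ ∈ Subgroup.closure {cs.simple i, cs.simple j} := by
    intro g hg
    induction hg using Subgroup.closure_induction with
    | mem z hz =>
      rcases hz with hz | hz <;> subst hz
      · exact h1
      · exact h2
    | one => simpa using one_mem (Subgroup.closure {cs.simple i, cs.simple j})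
    | mul z w _ _ ihz ihw =>
      have he : y₀ * (z * w) * y₀⁻¹ = (y₀ * z * y₀⁻¹) * (y₀ * w * y₀⁻¹) := by group
      rw [he]
      exact mul_mem ihz ihw
    | inv z _ ihz =>
      have he : y₀ * z⁻¹ * y₀⁻¹ = (y₀ * z * y₀⁻¹)⁻¹ := by group
      rw [he]
      exact inv_mem ihz
  -- choose an element of minimal length in the double coset D y₀ D'
  have hex : ∃ n, ∃ z : W, (∃ d ∈ Subgroup.closure {cs.simple i, cs.simple j},
      ∃ d' ∈ Subgroup.closure {cs.simple i', cs.simple j'}, z = d * y₀ * d') ∧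
      cs.length z = n :=
    ⟨cs.length y₀, y₀, ⟨1, one_mem _, 1, one_mem _, by group⟩, rfl⟩
  obtain ⟨y, ⟨d₀, hd₀, d₀', hd₀', hyeq⟩, hylen⟩ := Nat.find_spec hex
  have hymin : ∀ z : W, (∃ d ∈ Subgroup.closure {cs.simple i, cs.simple j},
      ∃ d' ∈ Subgroup.closure {cs.simple i', cs.simple j'}, z = d * y₀ * d') →
      cs.length y ≤ cs.length z := by
    intro z hz
    rw [hylen]
    exact Nat.find_min' hex ⟨z, hz, rfl⟩
  have hconj : ∀ g ∈ Subgroup.closure {cs.simple i', cs.simple j'},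
      y * g * y⁻¹ ∈ Subgroup.closure {cs.simple i, cs.simple j} := by
    intro g hg
    have he : y * g * y⁻¹ = d₀ * (y₀ * (d₀' * g * d₀'⁻¹) * y₀⁻¹) * d₀⁻¹ := by
      rw [hyeq]
      group
    rw [he]
    exact mul_mem (mul_mem hd₀
      (hconj0 _ (mul_mem (mul_mem hd₀' hg) (inv_mem hd₀')))) (inv_mem hd₀)
  have hminL : ∀ d ∈ Subgroup.closure {cs.simple i, cs.simple j},
      cs.length y ≤ cs.length (d * y) := by
    intro d hd
    apply hymin
    exact ⟨d * d₀, mul_mem hd hd₀, d₀', hd₀', by rw [hyeq]; group⟩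
  have hstepR : ∀ k : B, cs.simple k ∈ Subgroup.closure {cs.simple i', cs.simple j'} →
      cs.length (y * cs.simple k) = cs.length y + 1 := by
    intro k hk
    have hge : cs.length y ≤ cs.length (y * cs.simple k) := by
      apply hymin
      exact ⟨d₀, hd₀, d₀' * cs.simple k, mul_mem hd₀' hk, by rw [hyeq]; group⟩
    rcases cs.length_mul_simple y k with h | h
    · exact h
    · omega
  have hsimple_of : ∀ k : B, cs.simple k ∈ Subgroup.closure {cs.simple i', cs.simple j'} →
      y * cs.simple k * y⁻¹ = cs.simple i ∨ y * cs.simple k * y⁻¹ = cs.simple j := by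
    intro k hk
    have ha : y * cs.simple k * y⁻¹ ∈ Subgroup.closure {cs.simple i, cs.simple j} := hconj _ hk
    have hay : (y * cs.simple k * y⁻¹) * y = y * cs.simple k := by group
    have hadd := cs.deodhar_left i j y hminL _ ha
    rw [hay, hstepR k hk] at hadd
    have hlen1 : cs.length (y * cs.simple k * y⁻¹) = 1 := by omega
    obtain ⟨κ, hredκ, hmemκ, haκ⟩ := cs.reduced_word_of_mem_closure i j _ ha
    have hκlen : κ.length = 1 := by
      rw [haκ] at hlen1
      have := hredκ
      rw [CoxeterSystem.IsReduced] at this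
      omega
    obtain ⟨z, hz⟩ := List.length_eq_one_iff.mp hκlen
    subst hz
    rcases hmemκ z (by simp) with h' | h' <;> subst h'
    · left
      rw [haκ, cs.wordProd_singleton]
    · right
      rw [haκ, cs.wordProd_singleton]
  have hi'mem : cs.simple i' ∈ Subgroup.closure {cs.simple i', cs.simple j'} :=
    Subgroup.subset_closure (by simp)
  have hj'mem : cs.simple j' ∈ Subgroup.closure {cs.simple i', cs.simple j'} :=
    Subgroup.subset_closure (by simp)
  have ha' := hsimple_of i' hi'mem
  have hb' := hsimple_of j' hj'mem
  have hord' : orderOf (cs.simple i' * cs.simple j') = M.M i' j' :=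
    cs.orderOf_simple_mul_simple i' j' hij' hfin'
  have hM'ne1 : M.M i' j' ≠ 1 := M.off_diagonal i' j' hij'
  have hne1 : cs.simple i' * cs.simple j' ≠ 1 := by
    intro h
    rw [h, orderOf_one] at hord'
    exact hM'ne1 hord'.symm
  have hab : (y * cs.simple i' * y⁻¹) * (y * cs.simple j' * y⁻¹)
      = y * (cs.simple i' * cs.simple j') * y⁻¹ := by group
  have hanb : (y * cs.simple i' * y⁻¹) ≠ (y * cs.simple j' * y⁻¹) := by
    intro heq
    apply hne1
    have haa1 : (y * cs.simple i' * y⁻¹) * (y * cs.simple i' * y⁻¹) = 1 := by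
      rcases ha' with h' | h' <;> rw [h']
      · exact cs.simple_mul_simple_self i
      · exact cs.simple_mul_simple_self j
    have h0 : y * (cs.simple i' * cs.simple j') * y⁻¹ = 1 := by
      nth_rewrite 2 [heq] at haa1
      rw [← hab]
      exact haa1
    have := congrArg (fun z => y⁻¹ * z * y) h0
    simpa [mul_assoc] using this
  have horder_ab : orderOf ((y * cs.simple i' * y⁻¹) * (y * cs.simple j' * y⁻¹)) = M.M i j := by
    rcases ha' with hA | hA <;> rcases hb' with hB | hB
    · exact absurd (hA.trans hB.symm) hanb
    · rw [hA, hB]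
      exact cs.orderOf_simple_mul_simple i j hij hfin
    · rw [hA, hB]
      rw [cs.orderOf_simple_mul_simple j i (Ne.symm hij) (by rw [M.symmetric j i]; exact hfin)]
      exact M.symmetric j i
    · exact absurd (hA.trans hB.symm) hanb
  rw [hab, orderOf_conj''] at horder_ab
  have huv' : u * v = x * (cs.simple i' * cs.simple j') * x⁻¹ := by
    rw [hu', hv']
    group
  rw [huv', orderOf_conj'']
  exact horder_ab


/-- Let `s = s_i`, `t = s_j` be distinct simple reflections with
`m_{s,t} = M i j` finite, let `(u, v)` belong to `𝔑` (i.e. `(u,v)` is componentwise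
conjugate, by a single element, to a pair of distinct simple reflections with finite
Coxeter matrix entry), and let `q ∈ W`. If `u, v ∈ q D_{s,t} q⁻¹`, where `D_{s,t}` is
the subgroup generated by `s` and `t`, then the order of `uv` equals `M i j`. -/
theorem order_eq_of_mem_conj_dihedral {B W : Type*} [Group W] {M : CoxeterMatrix B}
    (cs : CoxeterSystem M W) (i j : B) (hij : i ≠ j) (hfin : M.M i j ≠ 0)
    (u v : W)
    (huv : ∃ (x : W) (i' j' : B), i' ≠ j' ∧ M.M i' j' ≠ 0 ∧
        u = x * cs.simple i' * x⁻¹ ∧ v = x * cs.simple j' * x⁻¹)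
    (q : W)
    (hu : q⁻¹ * u * q ∈ Subgroup.closure {cs.simple i, cs.simple j})
    (hv : q⁻¹ * v * q ∈ Subgroup.closure {cs.simple i, cs.simple j}) :
    orderOf (u * v) = M.M i j :=
  order_eq_of_mem_conj_dihedral' cs i j hij hfin u v huv q hu hv
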